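/- Let G = H × K be a finite nonsolvable group where H is nonsolvable and admits an involutionary solvabilizer covering. (1) If K is solvable, then α_inv(H × K) = α_inv(H). (2) If K is nonsolvable, then α_inv(H × K) = min{α_inv(H), α_inv(K)}, where α_inv(K) is taken to be ∞ if K admits no involutionary solvabilizer covering. -/

import Mathlib

open scoped MatrixGroups

/-- The solvabilizer of `x` in `G`:
`Sol_G(x) = {y : the subgroup generated by x and y is solvable}`. -/
def Sol {G : Type*} [Group G] (x : G) : Set G :=
  {y | IsSolvable ↥(Subgroup.closure ({x, y} : Set G))}

/-- The solvabilizer number `α(G)`: the minimum cardinality of a set `X` of elements lying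
outside the solvable radical (equivalently, outside every solvable normal subgroup)
whose solvabilizers cover `G`. -/
noncomputable def solvNumber (G : Type*) [Group G] : ℕ :=
  sInf {n : ℕ | ∃ X : Finset G,
    (∀ x ∈ X, ¬∃ N : Subgroup G, N.Normal ∧ IsSolvable ↥N ∧ x ∈ N) ∧
    X.card = n ∧ ∀ g : G, ∃ x ∈ X, g ∈ Sol x}


/-- The involutionary solvabilizer number `α_inv(G)` (valued in `ℕ∞`, equal to `∞` when no
involutionary solvabilizer covering exists): the minimum cardinality of a set `X` of
involutions outside the solvable radical whose solvabilizers cover `G`. -/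
noncomputable def solvNumberInv (G : Type*) [Group G] : ℕ∞ :=
  sInf {n : ℕ∞ | ∃ X : Finset G,
    (∀ x ∈ X, orderOf x = 2) ∧
    (∀ x ∈ X, ¬∃ N : Subgroup G, N.Normal ∧ IsSolvable ↥N ∧ x ∈ N) ∧
    (X.card : ℕ∞) = n ∧ ∀ g : G, ∃ x ∈ X, g ∈ Sol x}

set_option maxHeartbeats 1000000

section Aux

variable {G G' : Type*} [Group G] [Group G']

lemma mySolvLe {S T : Subgroup G} (h : S ≤ T) (hT : IsSolvable T) : IsSolvable S := by
  haveI : Group.IsSolvable T := hT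
  exact solvable_of_solvable_injective (Subgroup.inclusion_injective h)

lemma mySolvMap (f : G →* G') {S : Subgroup G} (hS : IsSolvable S) : IsSolvable (S.map f) := by
  haveI : Group.IsSolvable S := hS
  exact solvable_of_surjective (f.subgroupMap_surjective S)

lemma mySolvClosurePairMap (f : G →* G') {x y : G}
    (h : IsSolvable (Subgroup.closure ({x, y} : Set G))) :
    IsSolvable (Subgroup.closure ({f x, f y} : Set G')) := by
  have := mySolvMap f h
  rwa [MonoidHom.map_closure, Set.image_pair] at this

lemma mySolvFst {H K : Type*} [Group H] [Group K] {p q : H × K}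
    (h : IsSolvable (Subgroup.closure ({p, q} : Set (H × K)))) :
    IsSolvable (Subgroup.closure ({p.1, q.1} : Set H)) := by
  have := mySolvMap (MonoidHom.fst H K) h
  rwa [MonoidHom.map_closure, Set.image_pair, MonoidHom.coe_fst] at this

lemma mySolvSnd {H K : Type*} [Group H] [Group K] {p q : H × K}
    (h : IsSolvable (Subgroup.closure ({p, q} : Set (H × K)))) :
    IsSolvable (Subgroup.closure ({p.2, q.2} : Set K)) := by
  have := mySolvMap (MonoidHom.snd H K) h
  rwa [MonoidHom.map_closure, Set.image_pair, MonoidHom.coe_snd] at this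

lemma mySolvProd {H K : Type*} [Group H] [Group K] {N : Subgroup H} {M : Subgroup K}
    (hN : IsSolvable N) (hM : IsSolvable M) : IsSolvable (N.prod M) := by
  haveI : Group.IsSolvable N := hN; haveI : Group.IsSolvable M := hM
  exact solvable_of_solvable_injective
    (f := (Subgroup.prodEquiv N M).toMonoidHom) (Subgroup.prodEquiv N M).injective

lemma mySolvPairOne (k : G) : IsSolvable (Subgroup.closure ({1, k} : Set G)) := by
  refine mySolvLe (T := Subgroup.zpowers k) ?_ ?_
  · rw [Subgroup.zpowers_eq_closure, Subgroup.closure_le]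
    rw [Set.insert_subset_iff, Set.singleton_subset_iff]
    exact ⟨Subgroup.one_mem _, Subgroup.subset_closure rfl⟩
  · exact Group.isSolvable_of_comm (fun a b => by
      obtain ⟨x, hx⟩ := a; obtain ⟨y, hy⟩ := b
      obtain ⟨m, rfl⟩ := Subgroup.mem_zpowers_iff.1 hx
      obtain ⟨n, rfl⟩ := Subgroup.mem_zpowers_iff.1 hy
      exact Subtype.ext (zpow_mul_comm k m n))

lemma goodNeOne {x : G} (hx : ¬∃ N : Subgroup G, N.Normal ∧ IsSolvable ↥N ∧ x ∈ N) :
    x ≠ 1 := by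
  rintro rfl
  exact hx ⟨⊥, inferInstance, (inferInstance : Group.IsSolvable _), Subgroup.mem_bot.2 rfl⟩

/-- Lifting a covering of `H` to `H × K`: `α_inv(H × K) ≤ α_inv(H)`. -/
lemma liftLeft {H K : Type*} [Group H] [Group K] :
    solvNumberInv (H × K) ≤ solvNumberInv H := by
  classical
  apply le_sInf
  rintro n ⟨X, hord, hgood, hcard, hcov⟩
  apply sInf_le
  refine ⟨X.image (fun x => ((x, 1) : H × K)), ?_, ?_, ?_, ?_⟩
  · intro p hp
    rw [Finset.mem_image] at hp
    obtain ⟨x, hx, rfl⟩ := hp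
    refine orderOf_eq_prime ?_ ?_
    · have : x ^ 2 = 1 := by rw [← hord x hx]; exact pow_orderOf_eq_one x
      exact Prod.ext (by simpa using this) (by simp)
    · simp only [ne_eq, Prod.mk_eq_one, not_and]
      intro hx1
      exact absurd (hx1 ▸ hord x hx) (by norm_num [orderOf_one])
  · intro p hp
    rw [Finset.mem_image] at hp
    obtain ⟨x, hx, rfl⟩ := hp
    rintro ⟨N, hN, hNs, hmem⟩
    refine hgood x hx ⟨N.map (MonoidHom.fst H K), hN.map _ Prod.fst_surjective,
      mySolvMap _ hNs, Subgroup.mem_map_of_mem _ hmem⟩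
  · rw [Finset.card_image_of_injective _ (fun a b hab => (Prod.mk.injEq _ _ _ _ ▸ hab).1),
      hcard]
  · rintro ⟨h, k⟩
    obtain ⟨x, hx, hsol⟩ := hcov h
    refine ⟨(x, 1), Finset.mem_image_of_mem _ hx, ?_⟩
    show IsSolvable (Subgroup.closure ({(x, 1), (h, k)} : Set (H × K)))
    refine mySolvLe (T := (Subgroup.closure ({x, h} : Set H)).prod
      (Subgroup.closure ({1, k} : Set K))) ?_ (mySolvProd hsol (mySolvPairOne k))
    rw [Subgroup.closure_le, Set.insert_subset_iff, Set.singleton_subset_iff]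
    constructor
    · exact Subgroup.mem_prod.2 ⟨Subgroup.subset_closure (Set.mem_insert _ _),
        Subgroup.one_mem _⟩
    · exact Subgroup.mem_prod.2
        ⟨Subgroup.subset_closure (Set.mem_insert_of_mem _ rfl),
         Subgroup.subset_closure (Set.mem_insert_of_mem _ rfl)⟩

/-- Lifting a covering of `K` to `H × K`: `α_inv(H × K) ≤ α_inv(K)`. -/
lemma liftRight {H K : Type*} [Group H] [Group K] :
    solvNumberInv (H × K) ≤ solvNumberInv K := by
  classical
  apply le_sInf
  rintro n ⟨X, hord, hgood, hcard, hcov⟩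
  apply sInf_le
  refine ⟨X.image (fun y => ((1, y) : H × K)), ?_, ?_, ?_, ?_⟩
  · intro p hp
    rw [Finset.mem_image] at hp
    obtain ⟨y, hy, rfl⟩ := hp
    refine orderOf_eq_prime ?_ ?_
    · have : y ^ 2 = 1 := by rw [← hord y hy]; exact pow_orderOf_eq_one y
      exact Prod.ext (by simp) (by simpa using this)
    · simp only [ne_eq, Prod.mk_eq_one, not_and]
      intro _ hy1
      exact absurd (hy1 ▸ hord y hy) (by norm_num [orderOf_one])
  · intro p hp
    rw [Finset.mem_image] at hp
    obtain ⟨y, hy, rfl⟩ := hp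
    rintro ⟨N, hN, hNs, hmem⟩
    refine hgood y hy ⟨N.map (MonoidHom.snd H K), hN.map _ Prod.snd_surjective,
      mySolvMap _ hNs, Subgroup.mem_map_of_mem _ hmem⟩
  · rw [Finset.card_image_of_injective _ (fun a b hab => (Prod.mk.injEq _ _ _ _ ▸ hab).2),
      hcard]
  · rintro ⟨h, k⟩
    obtain ⟨y, hy, hsol⟩ := hcov k
    refine ⟨(1, y), Finset.mem_image_of_mem _ hy, ?_⟩
    show IsSolvable (Subgroup.closure ({(1, y), (h, k)} : Set (H × K)))
    refine mySolvLe (T := (Subgroup.closure ({1, h} : Set H)).prod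
      (Subgroup.closure ({y, k} : Set K))) ?_ (mySolvProd (mySolvPairOne h) hsol)
    rw [Subgroup.closure_le, Set.insert_subset_iff, Set.singleton_subset_iff]
    constructor
    · exact Subgroup.mem_prod.2 ⟨Subgroup.one_mem _,
        Subgroup.subset_closure (Set.mem_insert _ _)⟩
    · exact Subgroup.mem_prod.2
        ⟨Subgroup.subset_closure (Set.mem_insert_of_mem _ rfl),
         Subgroup.subset_closure (Set.mem_insert_of_mem _ rfl)⟩

/-- Projecting a covering of `H × K` to one of `H`, assuming every point of `H` is
covered by an element whose first coordinate lies outside the solvable radical. -/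
lemma projLeft {H K : Type*} [Group H] [Group K] (X : Finset (H × K))
    (hord : ∀ p ∈ X, orderOf p = 2)
    (P : ∀ g : H, ∃ p ∈ X, (¬∃ N : Subgroup H, N.Normal ∧ IsSolvable ↥N ∧ p.1 ∈ N) ∧
        IsSolvable (Subgroup.closure ({p.1, g} : Set H))) :
    solvNumberInv H ≤ (X.card : ℕ∞) := by
  classical
  set Y := (X.filter (fun p => ¬∃ N : Subgroup H, N.Normal ∧ IsSolvable ↥N ∧ p.1 ∈ N)).image
    Prod.fst with hY
  have hmem : ∀ y ∈ Y, ∃ p ∈ X,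
      (¬∃ N : Subgroup H, N.Normal ∧ IsSolvable ↥N ∧ p.1 ∈ N) ∧ p.1 = y := by
    intro y hy
    rw [hY, Finset.mem_image] at hy
    obtain ⟨p, hp, rfl⟩ := hy
    rw [Finset.mem_filter] at hp
    exact ⟨p, hp.1, hp.2, rfl⟩
  refine le_trans (sInf_le ⟨Y, ?_, ?_, rfl, ?_⟩) ?_
  · intro y hy
    obtain ⟨p, hpX, hgood, rfl⟩ := hmem y hy
    refine orderOf_eq_prime ?_ (goodNeOne hgood)
    have : p ^ 2 = 1 := by rw [← hord p hpX]; exact pow_orderOf_eq_one p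
    exact congrArg Prod.fst this
  · intro y hy
    obtain ⟨p, hpX, hgood, rfl⟩ := hmem y hy
    exact hgood
  · intro g
    obtain ⟨p, hpX, hgood, hsol⟩ := P g
    refine ⟨p.1, ?_, hsol⟩
    rw [hY, Finset.mem_image]
    exact ⟨p, Finset.mem_filter.2 ⟨hpX, hgood⟩, rfl⟩
  · exact_mod_cast le_trans Finset.card_image_le (Finset.card_filter_le _ _)

/-- Projecting a covering of `H × K` to one of `K`, given a point `g₀ : H` witnessing
that first coordinates solvably generating with `g₀` all lie in the solvable radical. -/
lemma projRight {H K : Type*} [Group H] [Group K] (X : Finset (H × K))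
    (hord : ∀ p ∈ X, orderOf p = 2)
    (hgood : ∀ p ∈ X, ¬∃ N : Subgroup (H × K), N.Normal ∧ IsSolvable ↥N ∧ p ∈ N)
    (g₀ : H)
    (hg₀ : ∀ p ∈ X, IsSolvable (Subgroup.closure ({p.1, g₀} : Set H)) →
        ∃ N : Subgroup H, N.Normal ∧ IsSolvable ↥N ∧ p.1 ∈ N)
    (hcov : ∀ g : H × K, ∃ x ∈ X, g ∈ Sol x) :
    solvNumberInv K ≤ (X.card : ℕ∞) := by
  classical
  set Y := (X.filter (fun p => IsSolvable (Subgroup.closure ({p.1, g₀} : Set H)))).image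
    Prod.snd with hY
  have hmem : ∀ y ∈ Y, ∃ p ∈ X,
      IsSolvable (Subgroup.closure ({p.1, g₀} : Set H)) ∧ p.2 = y := by
    intro y hy
    rw [hY, Finset.mem_image] at hy
    obtain ⟨p, hp, rfl⟩ := hy
    rw [Finset.mem_filter] at hp
    exact ⟨p, hp.1, hp.2, rfl⟩
  have hYgood : ∀ y ∈ Y, ¬∃ M : Subgroup K, M.Normal ∧ IsSolvable ↥M ∧ y ∈ M := by
    intro y hy
    obtain ⟨p, hpX, hsol, rfl⟩ := hmem y hy
    obtain ⟨N, hN, hNs, hmemN⟩ := hg₀ p hpX hsol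
    rintro ⟨M, hM, hMs, hmemM⟩
    haveI := hN; haveI := hM
    exact hgood p hpX ⟨N.prod M, inferInstance, mySolvProd hNs hMs,
      Subgroup.mem_prod.2 ⟨hmemN, hmemM⟩⟩
  refine le_trans (sInf_le ⟨Y, ?_, hYgood, rfl, ?_⟩) ?_
  · intro y hy
    have h1 := goodNeOne (hYgood y hy)
    obtain ⟨p, hpX, _, rfl⟩ := hmem y hy
    refine orderOf_eq_prime ?_ h1
    have : p ^ 2 = 1 := by rw [← hord p hpX]; exact pow_orderOf_eq_one p
    exact congrArg Prod.snd this
  · intro k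
    obtain ⟨p, hpX, hsol⟩ := hcov (g₀, k)
    have hsol' : IsSolvable (Subgroup.closure ({p, (g₀, k)} : Set (H × K))) := hsol
    have hs1 : IsSolvable (Subgroup.closure ({p.1, g₀} : Set H)) :=
      mySolvFst (p := p) (q := (g₀, k)) hsol'
    have hs2 : IsSolvable (Subgroup.closure ({p.2, k} : Set K)) :=
      mySolvSnd (p := p) (q := (g₀, k)) hsol'
    refine ⟨p.2, ?_, hs2⟩
    rw [hY, Finset.mem_image]
    exact ⟨p, Finset.mem_filter.2 ⟨hpX, hs1⟩, rfl⟩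
  · exact_mod_cast le_trans Finset.card_image_le (Finset.card_filter_le _ _)

end Aux

/-- For `G = H × K` with `H` nonsolvable admitting an involutionary solvabilizer
covering: (1) if `K` is solvable then `α_inv(G) = α_inv(H)`;
(2) if `K` is nonsolvable then `α_inv(G) = min {α_inv(H), α_inv(K)}`
(with value `∞` when no involutionary covering exists). -/
theorem stmt11 {H K : Type*} [Group H] [Group K] [Finite H] [Finite K]
    (hH : ¬IsSolvable H)
    (hcov : ∃ X : Finset H, (∀ x ∈ X, orderOf x = 2) ∧
      (∀ x ∈ X, ¬∃ N : Subgroup H, N.Normal ∧ IsSolvable ↥N ∧ x ∈ N) ∧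
      ∀ g : H, ∃ x ∈ X, g ∈ Sol x) :
    (IsSolvable K → solvNumberInv (H × K) = solvNumberInv H) ∧
    (¬IsSolvable K →
      solvNumberInv (H × K) = min (solvNumberInv H) (solvNumberInv K)) := by
  constructor
  · intro hK
    refine le_antisymm liftLeft (le_sInf ?_)
    rintro n ⟨X, hord, hgoodX, hcard, hcovX⟩
    rw [← hcard]
    refine projLeft X hord ?_
    intro g
    obtain ⟨p, hpX, hpsol⟩ := hcovX (g, 1)
    have hpsol' : IsSolvable (Subgroup.closure ({p, (g, 1)} : Set (H × K))) := hpsol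
    have hs1 : IsSolvable (Subgroup.closure ({p.1, g} : Set H)) :=
      mySolvFst (p := p) (q := (g, 1)) hpsol'
    refine ⟨p, hpX, ?_, hs1⟩
    rintro ⟨N, hN, hNs, hmemN⟩
    haveI := hN; haveI : Group.IsSolvable K := hK
    exact hgoodX p hpX ⟨N.prod ⊤, inferInstance, mySolvProd hNs (inferInstance : Group.IsSolvable _),
      Subgroup.mem_prod.2 ⟨hmemN, trivial⟩⟩
  · intro _
    refine le_antisymm (le_min liftLeft liftRight) (le_sInf ?_)
    rintro n ⟨X, hord, hgoodX, hcard, hcovX⟩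
    rw [← hcard]
    by_cases hc : ∀ g : H, ∃ p ∈ X,
        (¬∃ N : Subgroup H, N.Normal ∧ IsSolvable ↥N ∧ p.1 ∈ N) ∧
        IsSolvable (Subgroup.closure ({p.1, g} : Set H))
    · exact le_trans (min_le_left _ _) (projLeft X hord hc)
    · obtain ⟨g₀, hg₀⟩ : ∃ g₀ : H, ∀ p ∈ X,
          IsSolvable (Subgroup.closure ({p.1, g₀} : Set H)) →
          ∃ N : Subgroup H, N.Normal ∧ IsSolvable ↥N ∧ p.1 ∈ N := by
        by_contra h2
        push_neg at h2
        refine hc (fun g => ?_)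
        obtain ⟨p, hpX, hsol, hgood'⟩ := h2 g
        exact ⟨p, hpX, fun ⟨N, h1', h2', h3'⟩ => hgood' N h1' h2' h3', hsol⟩
      exact le_trans (min_le_right _ _) (projRight X hord hgoodX g₀ hg₀ hcovX)
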